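/- Assume V⁺ admits a monomial parametrization with exponent matrix A (data p, A, K, ψ) and that the cone generator matrix E has no zero row. Let c ∈ im₊(Z). Then the following are equivalent: (i) there exist k ∈ K and distinct a, b ∈ ℝ_{>0}^n with (k,a) ∈ V⁺, (k,b) ∈ V⁺ and Za = Zb = c; (ii) there exists k ∈ K such that the equation Z(ψ(k)⋆ξ^A) = c has at least two distinct solutions ξ₁ ≠ ξ₂ ∈ ℝ_{>0}^{n−p}; (iii) there exist a ∈ ℝ_{>0}^n and ξ ∈ ℝ_{>0}^{n−p} with ξ ≠ 𝟙 such that Z(a⋆ξ^A − a) = 0 and Za = c. -/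

import Mathlib

open Matrix

noncomputable section

/-- The monomial map φ: `phi Y x j = ∏ i, x i ^ Y i j`. -/
def phi {n r : ℕ} (Y : Matrix (Fin n) (Fin r) ℕ) (x : Fin n → ℝ) : Fin r → ℝ :=
  fun j => ∏ i, x i ^ Y i j

/-- The positive steady state variety V⁺. -/
def Vplus {n r : ℕ} (Y : Matrix (Fin n) (Fin r) ℕ) (S : Matrix (Fin n) (Fin r) ℝ) :
    Set ((Fin r → ℝ) × (Fin n → ℝ)) :=
  {p | (∀ j, 0 < p.1 j) ∧ (∀ i, 0 < p.2 i) ∧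
    S.mulVec (fun j => p.1 j * phi Y p.2 j) = 0}

/-- `E` is a cone generator matrix for `S`:
`E` is nonnegative and `ker S ∩ ℝ_{≥0}^r = {Eλ : λ ≥ 0}`. -/
def IsConeGenMatrix {n r d : ℕ} (S : Matrix (Fin n) (Fin r) ℝ)
    (E : Matrix (Fin r) (Fin d) ℝ) : Prop :=
  (∀ j l, 0 ≤ E j l) ∧
  {v : Fin r → ℝ | S.mulVec v = 0 ∧ ∀ j, 0 ≤ v j} =
    {v : Fin r → ℝ | ∃ lam : Fin d → ℝ, (∀ l, 0 ≤ lam l) ∧ v = E.mulVec lam}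

/-- The coefficient cone Λ(E). -/
def Lambda {r d : ℕ} (E : Matrix (Fin r) (Fin d) ℝ) : Set (Fin d → ℝ) :=
  {lam | (∀ l, 0 ≤ lam l) ∧ ∀ j, 0 < E.mulVec lam j}

/-- `ξ^B`: for a rational `q × m` matrix `B`, `(ξ^B) j = ∏ i, ξ i ^ (B i j)` (real powers). -/
def vecPow {q m : ℕ} (ξ : Fin q → ℝ) (B : Matrix (Fin q) (Fin m) ℚ) : Fin m → ℝ :=
  fun j => ∏ i, ξ i ^ ((B i j : ℝ))

/-- V⁺ admits a monomial parametrization with exponent matrix `A` (data `p`, `A`, `K`, `ψ`). -/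
def IsMonomialParamExp {n r : ℕ} (Y : Matrix (Fin n) (Fin r) ℕ)
    (S : Matrix (Fin n) (Fin r) ℝ) (p : ℕ) (A : Matrix (Fin (n - p)) (Fin n) ℚ)
    (K : Set (Fin r → ℝ)) (ψ : (Fin r → ℝ) → (Fin n → ℝ)) : Prop :=
  p < n ∧ A.rank = n - p ∧ (∀ k ∈ K, ∀ j, 0 < k j) ∧ (∀ k ∈ K, ∀ i, 0 < ψ k i) ∧
  ∀ k x, (∀ j : Fin r, 0 < k j) → (∀ i : Fin n, 0 < x i) →
    ((k, x) ∈ Vplus Y S ↔ k ∈ K ∧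
      ∃ ξ : Fin (n - p) → ℝ, (∀ l, 0 < ξ l) ∧ x = fun i => ψ k i * vecPow ξ A i)

/-- `Z` is a conservation matrix for `S` (with `s = rank S`):
its rows form a basis of the left kernel of `S`. -/
def IsConservationMatrix {n r : ℕ} (S : Matrix (Fin n) (Fin r) ℝ) (s : ℕ)
    (Z : Matrix (Fin (n - s)) (Fin n) ℝ) : Prop :=
  S.rank = s ∧ s < n ∧ LinearIndependent ℝ (fun i => Z i) ∧
    Submodule.span ℝ (Set.range (fun i => Z i)) = LinearMap.ker S.vecMulLinear

/-- `im₊(Z) = {Zx : x ≥ 0}`. -/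
def imPos {m n : ℕ} (Z : Matrix (Fin m) (Fin n) ℝ) : Set (Fin m → ℝ) :=
  {c | ∃ x : Fin n → ℝ, (∀ i, 0 ≤ x i) ∧ c = Z.mulVec x}

/-- The real row space of a rational matrix. -/
def rowSpace {q m : ℕ} (A : Matrix (Fin q) (Fin m) ℚ) : Submodule ℝ (Fin m → ℝ) :=
  Submodule.span ℝ (Set.range (fun l => fun i => ((A l i : ℝ))))

/-- The column space (image) of `S`. -/
def colSpace {n r : ℕ} (S : Matrix (Fin n) (Fin r) ℝ) : Submodule ℝ (Fin n → ℝ) :=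
  LinearMap.range S.mulVecLin

/-- Componentwise sign of a vector. -/
def signVec {m : ℕ} (v : Fin m → ℝ) : Fin m → ℝ := fun i => Real.sign (v i)

lemma vecPow_pos {q m : ℕ} {ξ : Fin q → ℝ} (h : ∀ l, 0 < ξ l)
    (B : Matrix (Fin q) (Fin m) ℚ) (j : Fin m) : 0 < vecPow ξ B j :=
  Finset.prod_pos fun i _ => Real.rpow_pos_of_pos (h i) _

lemma vecPow_mul {q m : ℕ} {ξ η : Fin q → ℝ} (hξ : ∀ l, 0 < ξ l) (_hη : ∀ l, 0 < η l)
    (B : Matrix (Fin q) (Fin m) ℚ) (j : Fin m) :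
    vecPow (fun i => ξ i * η i) B j = vecPow ξ B j * vecPow η B j := by
  unfold vecPow
  rw [← Finset.prod_mul_distrib]
  exact Finset.prod_congr rfl fun i _ => Real.mul_rpow (hξ i).le (_hη i).le

lemma vecPow_log {q m : ℕ} {ξ : Fin q → ℝ} (h : ∀ l, 0 < ξ l)
    (B : Matrix (Fin q) (Fin m) ℚ) (j : Fin m) :
    Real.log (vecPow ξ B j) = ∑ i, (B i j : ℝ) * Real.log (ξ i) := by
  rw [vecPow, Real.log_prod (fun i _ => (Real.rpow_pos_of_pos (h i) _).ne')]
  exact Finset.sum_congr rfl fun i _ => Real.log_rpow (h i) _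

lemma vecPow_injective {q m : ℕ} (A : Matrix (Fin q) (Fin m) ℚ) (hrank : A.rank = q)
    {ξ₁ ξ₂ : Fin q → ℝ} (h1 : ∀ l, 0 < ξ₁ l) (h2 : ∀ l, 0 < ξ₂ l)
    (h : vecPow ξ₁ A = vecPow ξ₂ A) : ξ₁ = ξ₂ := by
  classical
  -- rows of A are linearly independent over ℚ
  have hli : LinearIndependent ℚ (fun i => A i) := by
    rw [linearIndependent_iff_card_eq_finrank_span]
    rw [Set.finrank, show (Set.range fun i => A i) = Set.range A.row from rfl, ← Matrix.rank_eq_finrank_span_row, hrank, Fintype.card_fin]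
  -- Gram matrix has nonzero determinant
  have hdet : (A * Aᵀ).det ≠ 0 := by
    intro h0
    obtain ⟨v, hv0, hv⟩ := (Matrix.exists_mulVec_eq_zero_iff).mpr h0
    have hw : v ᵥ* A ⬝ᵥ v ᵥ* A = 0 := by
      have : v ⬝ᵥ (A * Aᵀ) *ᵥ v = 0 := by rw [hv, dotProduct_zero]
      rwa [← Matrix.mulVec_mulVec, Matrix.dotProduct_mulVec, Matrix.mulVec_transpose] at this
    have hzero : v ᵥ* A = 0 := dotProduct_self_eq_zero.mp hw
    have := Matrix.vecMul_injective_iff.mpr hli (a₁ := v) (a₂ := 0) (by simp [hzero])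
    exact hv0 this
  -- the difference of logs lies in the left kernel of the real matrix
  set u : Fin q → ℝ := fun i => Real.log (ξ₁ i) - Real.log (ξ₂ i) with hu_def
  have hu : ∀ j, ∑ i, (A i j : ℝ) * u i = 0 := by
    intro j
    have hj := congrArg Real.log (congrFun h j)
    rw [vecPow_log h1 A j, vecPow_log h2 A j] at hj
    simp only [hu_def, mul_sub, Finset.sum_sub_distrib, hj, sub_self]
  -- real Gram matrix
  set M : Matrix (Fin q) (Fin q) ℝ := ((A * Aᵀ)ᵀ).map (Rat.cast : ℚ → ℝ) with hM_def
  have hMdet : M.det ≠ 0 := by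
    have hmap := (Rat.castHom ℝ).map_det ((A * Aᵀ)ᵀ)
    rw [RingHom.mapMatrix_apply, Rat.coe_castHom] at hmap
    rw [hM_def, ← hmap, Matrix.det_transpose]
    exact_mod_cast hdet
  have hMu : M *ᵥ u = 0 := by
    funext j
    show ∑ i, M j i * u i = 0
    have : ∀ i, M j i = ∑ l, (A i l : ℝ) * (A j l : ℝ) := by
      intro i
      have e1 : M j i = (((A * Aᵀ) i j : ℚ) : ℝ) := rfl
      rw [e1, Matrix.mul_apply]
      push_cast
      exact Finset.sum_congr rfl fun l _ => by rw [Matrix.transpose_apply]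
    calc ∑ i, M j i * u i
        = ∑ i, ∑ l, (A i l : ℝ) * (A j l : ℝ) * u i := by
          refine Finset.sum_congr rfl fun i _ => ?_
          rw [this i, Finset.sum_mul]
      _ = ∑ l, ∑ i, (A i l : ℝ) * (A j l : ℝ) * u i := Finset.sum_comm
      _ = ∑ l, (A j l : ℝ) * ∑ i, (A i l : ℝ) * u i := by
          refine Finset.sum_congr rfl fun l _ => ?_
          rw [Finset.mul_sum]; exact Finset.sum_congr rfl fun i _ => by ring
      _ = 0 := by simp only [hu, mul_zero, Finset.sum_const_zero]
  have hu0 : u = 0 := by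
    by_contra hne
    exact hMdet (Matrix.exists_mulVec_eq_zero_iff.mp ⟨u, hne, hMu⟩)
  funext i
  have : Real.log (ξ₁ i) = Real.log (ξ₂ i) := by
    have := congrFun hu0 i
    simpa [hu_def, sub_eq_zero] using this
  calc ξ₁ i = Real.exp (Real.log (ξ₁ i)) := (Real.exp_log (h1 i)).symm
    _ = Real.exp (Real.log (ξ₂ i)) := by rw [this]
    _ = ξ₂ i := Real.exp_log (h2 i)

/-- multistationarity at a fixed total concentration c, three equivalent
formulations. -/
theorem multistationarity_in_c_space {n r d s p : ℕ} (hn : 1 ≤ n) (hr : 1 ≤ r)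
    (Y : Matrix (Fin n) (Fin r) ℕ) (S : Matrix (Fin n) (Fin r) ℝ)
    (A : Matrix (Fin (n - p)) (Fin n) ℚ) (K : Set (Fin r → ℝ))
    (ψ : (Fin r → ℝ) → (Fin n → ℝ)) (hparam : IsMonomialParamExp Y S p A K ψ)
    (E : Matrix (Fin r) (Fin d) ℝ) (hE : IsConeGenMatrix S E)
    (hrow : ∀ j, ∃ l, E j l ≠ 0)
    (Z : Matrix (Fin (n - s)) (Fin n) ℝ) (hZ : IsConservationMatrix S s Z)
    (c : Fin (n - s) → ℝ) (hc : c ∈ imPos Z) :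
    ((∃ k ∈ K, ∃ a b : Fin n → ℝ, a ≠ b ∧
        (k, a) ∈ Vplus Y S ∧ (k, b) ∈ Vplus Y S ∧
        Z.mulVec a = c ∧ Z.mulVec b = c) ↔
      (∃ k ∈ K, ∃ ξ₁ ξ₂ : Fin (n - p) → ℝ, (∀ l, 0 < ξ₁ l) ∧ (∀ l, 0 < ξ₂ l) ∧
        ξ₁ ≠ ξ₂ ∧ Z.mulVec (fun i => ψ k i * vecPow ξ₁ A i) = c ∧
        Z.mulVec (fun i => ψ k i * vecPow ξ₂ A i) = c)) ∧
    ((∃ k ∈ K, ∃ ξ₁ ξ₂ : Fin (n - p) → ℝ, (∀ l, 0 < ξ₁ l) ∧ (∀ l, 0 < ξ₂ l) ∧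
        ξ₁ ≠ ξ₂ ∧ Z.mulVec (fun i => ψ k i * vecPow ξ₁ A i) = c ∧
        Z.mulVec (fun i => ψ k i * vecPow ξ₂ A i) = c) ↔
      (∃ a : Fin n → ℝ, (∀ i, 0 < a i) ∧ ∃ ξ : Fin (n - p) → ℝ, (∀ l, 0 < ξ l) ∧
        ξ ≠ (fun _ => 1) ∧ Z.mulVec (fun i => a i * vecPow ξ A i - a i) = 0 ∧
        Z.mulVec a = c)) := by
  obtain ⟨hpn, hrank, hKpos, hψpos, hiff⟩ := hparam
  constructor
  · -- (i) ↔ (ii)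
    constructor
    · rintro ⟨k, hk, a, b, hab, haV, hbV, hZa, hZb⟩
      have hkpos := haV.1
      have hapos := haV.2.1
      have hbpos := hbV.2.1
      obtain ⟨-, ξ₁, hξ₁, ha⟩ := (hiff k a hkpos hapos).mp haV
      obtain ⟨-, ξ₂, hξ₂, hb⟩ := (hiff k b hkpos hbpos).mp hbV
      refine ⟨k, hk, ξ₁, ξ₂, hξ₁, hξ₂, ?_, ?_, ?_⟩
      · rintro rfl; exact hab (ha.trans hb.symm)
      · rw [← ha]; exact hZa
      · rw [← hb]; exact hZb
    · rintro ⟨k, hk, ξ₁, ξ₂, hξ₁, hξ₂, hne, hZ1, hZ2⟩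
      have hkpos := hKpos k hk
      have hapos : ∀ i, 0 < ψ k i * vecPow ξ₁ A i :=
        fun i => mul_pos (hψpos k hk i) (vecPow_pos hξ₁ A i)
      have hbpos : ∀ i, 0 < ψ k i * vecPow ξ₂ A i :=
        fun i => mul_pos (hψpos k hk i) (vecPow_pos hξ₂ A i)
      refine ⟨k, hk, fun i => ψ k i * vecPow ξ₁ A i, fun i => ψ k i * vecPow ξ₂ A i, ?_,
        (hiff k _ hkpos hapos).mpr ⟨hk, ξ₁, hξ₁, rfl⟩,
        (hiff k _ hkpos hbpos).mpr ⟨hk, ξ₂, hξ₂, rfl⟩, hZ1, hZ2⟩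
      intro hab
      apply hne
      apply vecPow_injective A hrank hξ₁ hξ₂
      funext j
      exact mul_left_cancel₀ (hψpos k hk j).ne' (congrFun hab j)
  · -- (ii) ↔ (iii)
    constructor
    · rintro ⟨k, hk, ξ₁, ξ₂, hξ₁, hξ₂, hne, hZ1, hZ2⟩
      have hdiv : ∀ l, 0 < ξ₂ l / ξ₁ l := fun l => div_pos (hξ₂ l) (hξ₁ l)
      refine ⟨fun i => ψ k i * vecPow ξ₁ A i,
        fun i => mul_pos (hψpos k hk i) (vecPow_pos hξ₁ A i),
        fun l => ξ₂ l / ξ₁ l, hdiv, ?_, ?_, hZ1⟩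
      · intro h
        apply hne
        funext l
        exact ((div_eq_one_iff_eq (hξ₁ l).ne').mp (congrFun h l)).symm
      · have hprod : ∀ j, vecPow ξ₁ A j * vecPow (fun l => ξ₂ l / ξ₁ l) A j = vecPow ξ₂ A j := by
          intro j
          rw [← vecPow_mul hξ₁ hdiv A j]
          have : (fun l => ξ₁ l * (ξ₂ l / ξ₁ l)) = ξ₂ := by
            funext l
            rw [mul_comm, div_mul_cancel₀ _ (hξ₁ l).ne']
          rw [this]
        have hfun : (fun i => ψ k i * vecPow ξ₁ A i * vecPow (fun l => ξ₂ l / ξ₁ l) A i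
              - ψ k i * vecPow ξ₁ A i)
            = (fun i => ψ k i * vecPow ξ₂ A i) - (fun i => ψ k i * vecPow ξ₁ A i) := by
          funext i
          show _ = ψ k i * vecPow ξ₂ A i - ψ k i * vecPow ξ₁ A i
          rw [mul_assoc, hprod i]
        rw [hfun, Matrix.mulVec_sub, hZ1, hZ2, sub_self]
    · rintro ⟨a, hapos, ξ, hξpos, hξne, hZ0, hZa⟩
      have hφpos : ∀ j, 0 < phi Y a j :=
        fun j => Finset.prod_pos fun i _ => pow_pos (hapos i) _
      have hvpos : ∀ j, 0 < E.mulVec (fun _ => 1) j := by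
        intro j
        obtain ⟨l, hl⟩ := hrow j
        have hvj : E.mulVec (fun _ => 1) j = ∑ l, E j l := by
          simp [Matrix.mulVec, dotProduct]
        rw [hvj]
        exact Finset.sum_pos' (fun l _ => hE.1 j l)
          ⟨l, Finset.mem_univ l, lt_of_le_of_ne (hE.1 j l) (Ne.symm hl)⟩
      have hSv : S.mulVec (E.mulVec (fun _ => 1)) = 0 := by
        have hmem : E.mulVec (fun _ => 1) ∈
            {w : Fin r → ℝ | ∃ lam : Fin d → ℝ, (∀ l, 0 ≤ lam l) ∧ w = E.mulVec lam} :=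
          ⟨fun _ => 1, fun _ => zero_le_one, rfl⟩
        rw [← hE.2] at hmem
        exact hmem.1
      have hkpos : ∀ j, 0 < (fun j => E.mulVec (fun _ => 1) j / phi Y a j) j :=
        fun j => div_pos (hvpos j) (hφpos j)
      have hVa : ((fun j => E.mulVec (fun _ => 1) j / phi Y a j), a) ∈ Vplus Y S := by
        refine ⟨hkpos, hapos, ?_⟩
        have heq : (fun j => (fun j => E.mulVec (fun _ => 1) j / phi Y a j) j * phi Y a j)
            = E.mulVec (fun _ => 1) :=
          funext fun j => div_mul_cancel₀ _ (hφpos j).ne'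
        rw [heq]
        exact hSv
      obtain ⟨hkK, ξ₁, hξ₁, ha⟩ := (hiff _ a hkpos hapos).mp hVa
      refine ⟨_, hkK, ξ₁, fun l => ξ₁ l * ξ l, hξ₁,
        fun l => mul_pos (hξ₁ l) (hξpos l), ?_, by rw [← ha]; exact hZa, ?_⟩
      · intro hEq
        apply hξne
        funext l
        have h1 : ξ₁ l = ξ₁ l * ξ l := congrFun hEq l
        have h2 : ξ₁ l * 1 = ξ₁ l * ξ l := by rw [mul_one]; exact h1
        exact (mul_left_cancel₀ (hξ₁ l).ne' h2).symm
      · have hfun : (fun i => ψ (fun j => E.mulVec (fun _ => 1) j / phi Y a j) i *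
              vecPow (fun l => ξ₁ l * ξ l) A i) = (fun i => a i * vecPow ξ A i) := by
          funext i
          rw [vecPow_mul hξ₁ hξpos A i, ← mul_assoc, ← congrFun ha i]
        rw [hfun]
        have h2 : Z.mulVec ((fun i => a i * vecPow ξ A i) - a) = 0 := hZ0
        rw [Matrix.mulVec_sub] at h2
        rw [sub_eq_zero.mp h2, hZa]
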